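/- The number of distinct pairwise alignments of a sequence of length n with a sequence of length m (where two alignments are identified when they have the same set of homologous/matched position pairs) equals the binomial coefficient C(n+m, m). -/

import Mathlib

open Finset

section Aux

variable {n m : ℕ}

/-- Rank determines the element in a finite linear order. -/
lemma rank_inj {α : Type*} [LinearOrder α] [DecidableEq α] {B : Finset α} {b b' : α}
    (hb : b ∈ B) (hb' : b' ∈ B)
    (h : (B.filter (· < b)).card = (B.filter (· < b')).card) : b = b' := by
  by_contra hne
  wlog hlt : b < b' generalizing b b'
  · exact this hb' hb h.symm (Ne.symm hne) (lt_of_le_of_ne (not_lt.1 hlt) (Ne.symm hne))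
  have hsub : B.filter (· < b) ⊂ B.filter (· < b') := by
    constructor
    · intro x hx
      simp only [mem_filter] at hx ⊢
      exact ⟨hx.1, hx.2.trans hlt⟩
    · intro hcon
      have : b ∈ B.filter (· < b) := hcon (by simp [hb, hlt])
      simp at this
  exact absurd h (Nat.ne_of_lt (card_lt_card hsub))

/-- fst is injective on a monotone matching. -/
lemma injOn_fst {h : Finset (Fin n × Fin m)}
    (hm : ∀ p ∈ h, ∀ q ∈ h, (p.1 < q.1 ↔ p.2 < q.2)) :
    Set.InjOn Prod.fst (h : Set (Fin n × Fin m)) := by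
  intro p hp q hq hpq
  have h1 := hm p hp q hq
  have h2 := hm q hq p hp
  have : p.2 = q.2 := by
    rcases lt_trichotomy p.2 q.2 with hc | hc | hc
    · exact absurd (h1.2 hc) (by simp [hpq])
    · exact hc
    · exact absurd (h2.2 hc) (by simp [hpq])
  exact Prod.ext hpq this

lemma injOn_snd {h : Finset (Fin n × Fin m)}
    (hm : ∀ p ∈ h, ∀ q ∈ h, (p.1 < q.1 ↔ p.2 < q.2)) :
    Set.InjOn Prod.snd (h : Set (Fin n × Fin m)) := by
  intro p hp q hq hpq
  have h1 := hm p hp q hq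
  have h2 := hm q hq p hp
  have : p.1 = q.1 := by
    rcases lt_trichotomy p.1 q.1 with hc | hc | hc
    · exact absurd (h1.1 hc) (by simp [hpq])
    · exact hc
    · exact absurd (h2.1 hc) (by simp [hpq])
  exact Prod.ext this hpq

/-- Rank of the first coordinate in the first image equals rank of the second
coordinate in the second image. -/
lemma rank_eq {h : Finset (Fin n × Fin m)}
    (hm : ∀ p ∈ h, ∀ q ∈ h, (p.1 < q.1 ↔ p.2 < q.2)) {p : Fin n × Fin m} (hp : p ∈ h) :
    ((h.image Prod.fst).filter (· < p.1)).card
      = ((h.image Prod.snd).filter (· < p.2)).card := by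
  have e1 : (h.image Prod.fst).filter (· < p.1)
      = (h.filter (fun q => q.1 < p.1)).image Prod.fst := by
    ext a
    simp only [mem_filter, mem_image]
    constructor
    · rintro ⟨⟨q, hq, rfl⟩, hlt⟩
      exact ⟨q, ⟨hq, hlt⟩, rfl⟩
    · rintro ⟨q, ⟨hq, hlt⟩, rfl⟩
      exact ⟨⟨q, hq, rfl⟩, hlt⟩
  have e2 : (h.image Prod.snd).filter (· < p.2)
      = (h.filter (fun q => q.2 < p.2)).image Prod.snd := by
    ext b
    simp only [mem_filter, mem_image]
    constructor
    · rintro ⟨⟨q, hq, rfl⟩, hlt⟩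
      exact ⟨q, ⟨hq, hlt⟩, rfl⟩
    · rintro ⟨q, ⟨hq, hlt⟩, rfl⟩
      exact ⟨⟨q, hq, rfl⟩, hlt⟩
  have e3 : h.filter (fun q => q.1 < p.1) = h.filter (fun q => q.2 < p.2) := by
    apply filter_congr
    intro q hq
    simpa using hm q hq p hp
  rw [e1, e2, e3]
  rw [card_image_of_injOn ((injOn_fst hm).mono (coe_subset.2 (filter_subset _ h))),
    card_image_of_injOn ((injOn_snd hm).mono (coe_subset.2 (filter_subset _ h)))]

/-- A monotone matching is determined by its two coordinate images. -/
lemma matching_subset {h₁ h₂ : Finset (Fin n × Fin m)}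
    (hm₁ : ∀ p ∈ h₁, ∀ q ∈ h₁, (p.1 < q.1 ↔ p.2 < q.2))
    (hm₂ : ∀ p ∈ h₂, ∀ q ∈ h₂, (p.1 < q.1 ↔ p.2 < q.2))
    (hA : h₁.image Prod.fst = h₂.image Prod.fst)
    (hB : h₁.image Prod.snd = h₂.image Prod.snd) : h₁ ⊆ h₂ := by
  intro p hp
  have hp1 : p.1 ∈ h₂.image Prod.fst := by
    rw [← hA]; exact mem_image_of_mem _ hp
  obtain ⟨q, hq, hq1⟩ := mem_image.1 hp1
  have hrank : ((h₁.image Prod.snd).filter (· < p.2)).card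
      = ((h₁.image Prod.snd).filter (· < q.2)).card := by
    rw [← rank_eq hm₁ hp, hB, ← rank_eq hm₂ hq]
    congr 2
    rw [hq1]
  have hpB : p.2 ∈ h₁.image Prod.snd := mem_image_of_mem _ hp
  have hqB : q.2 ∈ h₁.image Prod.snd := by rw [hB]; exact mem_image_of_mem _ hq
  have : p.2 = q.2 := rank_inj hpB hqB hrank
  have : p = q := Prod.ext hq1.symm this
  rw [this]; exact hq

lemma filter_card_eq_choose (N k : ℕ) :
    ((univ : Finset (Finset (Fin N))).filter (fun A => A.card = k)).card = N.choose k := by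
  have : (univ : Finset (Finset (Fin N))).filter (fun A => A.card = k)
      = Finset.powersetCard k univ := by
    rw [powersetCard_eq_filter, powerset_univ]
  rw [this, card_powersetCard, card_univ, Fintype.card_fin]

lemma sum_choose_mul (n m : ℕ) :
    ∑ k ∈ range (n + 1), n.choose k * m.choose k = (n + m).choose m := by
  have h1 : ∑ k ∈ range (n + 1), n.choose k * m.choose k
      = ∑ k ∈ range (n + m + 1), n.choose k * m.choose k := by
    apply sum_subset (range_subset_range.2 (by omega))
    intro k _ hk
    have : n < k := by simpa using hk
    simp [Nat.choose_eq_zero_of_lt this]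
  have h2 : ∑ k ∈ range (m + 1), n.choose k * m.choose k
      = ∑ k ∈ range (n + m + 1), n.choose k * m.choose k := by
    apply sum_subset (range_subset_range.2 (by omega))
    intro k _ hk
    have : m < k := by simpa using hk
    simp [Nat.choose_eq_zero_of_lt this]
  rw [h1, ← h2]
  rw [Nat.add_choose_eq, Finset.Nat.sum_antidiagonal_eq_sum_range_succ_mk]
  apply sum_congr rfl
  intro k hk
  have hk' : k ≤ m := by simpa [Nat.lt_succ_iff] using hk
  simp [Nat.choose_symm hk']

end Aux

/-- The number of distinct pairwise alignments of sequences of lengths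
`n` and `m` (alignments identified with their set of matched position pairs, which
forms a monotone partial matching) equals `C(n+m, m)`. -/
theorem card_distinct_alignments (n m : ℕ) :
    ((Finset.univ : Finset (Finset (Fin n × Fin m))).filter
      (fun h => ∀ p ∈ h, ∀ q ∈ h, (p.1 < q.1 ↔ p.2 < q.2))).card
      = (n + m).choose m := by
  set S := (Finset.univ : Finset (Finset (Fin n × Fin m))).filter
      (fun h => ∀ p ∈ h, ∀ q ∈ h, (p.1 < q.1 ↔ p.2 < q.2)) with hS
  set T := (Finset.univ : Finset (Finset (Fin n) × Finset (Fin m))).filter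
      (fun AB => AB.1.card = AB.2.card) with hT
  have hST : S.card = T.card := by
    apply card_bij (fun h _ => (h.image Prod.fst, h.image Prod.snd))
    · intro h hh
      simp only [hS, mem_filter, mem_univ, true_and] at hh
      simp only [hT, mem_filter, mem_univ, true_and]
      rw [card_image_of_injOn (injOn_fst hh), card_image_of_injOn (injOn_snd hh)]
    · intro h₁ hh₁ h₂ hh₂ heq
      simp only [hS, mem_filter, mem_univ, true_and] at hh₁ hh₂
      have hA : h₁.image Prod.fst = h₂.image Prod.fst := congrArg Prod.fst heq
      have hB : h₁.image Prod.snd = h₂.image Prod.snd := congrArg Prod.snd heq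
      exact subset_antisymm (matching_subset hh₁ hh₂ hA hB)
        (matching_subset hh₂ hh₁ hA.symm hB.symm)
    · rintro ⟨A, B⟩ hAB
      simp only [hT, mem_filter, mem_univ, true_and] at hAB
      set e := A.orderIsoOfFin rfl with he
      set f := B.orderIsoOfFin hAB.symm with hf
      refine ⟨(univ : Finset (Fin A.card)).image (fun i => ((e i : Fin n), (f i : Fin m))),
        ?_, ?_⟩
      · simp only [hS, mem_filter, mem_univ, true_and]
        intro p hp q hq
        simp only [mem_image, mem_univ, true_and] at hp hq
        obtain ⟨i, rfl⟩ := hp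
        obtain ⟨j, rfl⟩ := hq
        simp only [Subtype.coe_lt_coe, e.lt_iff_lt, f.lt_iff_lt]
      · have himg1 : ((univ : Finset (Fin A.card)).image
            (fun i => ((e i : Fin n), (f i : Fin m)))).image Prod.fst = A := by
          ext a
          simp only [image_image, mem_image, mem_univ, true_and, Function.comp]
          constructor
          · rintro ⟨i, rfl⟩; exact (e i).2
          · intro ha; exact ⟨e.symm ⟨a, ha⟩, by simp⟩
        have himg2 : ((univ : Finset (Fin A.card)).image
            (fun i => ((e i : Fin n), (f i : Fin m)))).image Prod.snd = B := by
          ext b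
          simp only [image_image, mem_image, mem_univ, true_and, Function.comp]
          constructor
          · rintro ⟨i, rfl⟩; exact (f i).2
          · intro hb; exact ⟨f.symm ⟨b, hb⟩, by simp⟩
        exact Prod.ext himg1 himg2
  rw [hST, ← sum_choose_mul n m]
  have hfib : T.card = ∑ k ∈ range (n + 1), (T.filter (fun AB => AB.1.card = k)).card := by
    apply card_eq_sum_card_fiberwise
    intro AB _
    simp only [mem_coe, mem_range, Nat.lt_succ_iff]
    calc AB.1.card ≤ Fintype.card (Fin n) := card_le_univ _
      _ = n := Fintype.card_fin n
  rw [hfib]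
  apply sum_congr rfl
  intro k _
  have : T.filter (fun AB => AB.1.card = k)
      = ((univ : Finset (Finset (Fin n))).filter (fun A => A.card = k)) ×ˢ
        ((univ : Finset (Finset (Fin m))).filter (fun B => B.card = k)) := by
    ext AB
    simp only [hT, mem_filter, mem_univ, true_and, mem_product]
    omega
  rw [this, card_product, filter_card_eq_choose, filter_card_eq_choose]
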